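/- arXiv:1004.0533 — 2 statements merged into one kernel-verified Lean document; each statement's English description precedes it below -/
import Mathlib

section
/- (Decreasing transformation equivariance) If φ : ℝ → ℝ is non-increasing and right continuous, then for any random variable X and p ∈ (0,1), lq_{φ(X)}(p) = φ(rq_X(1−p)); if φ is non-increasing and left continuous, then rq_{φ(X)}(p) = φ(lq_X(1−p)). -/
open MeasureTheory Set

/-- Decreasing transformation equivariance:
for non-increasing right continuous φ, lq_{φ(X)}(p) = φ(rq_X(1-p));
for non-increasing left continuous φ, rq_{φ(X)}(p) = φ(lq_X(1-p)). -/
theorem decreasing_transformation_equivariance {Ω : Type*} [MeasurableSpace Ω]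
    (P : Measure Ω) [IsProbabilityMeasure P] (X : Ω → ℝ) (hX : Measurable X)
    (φ : ℝ → ℝ) (hanti : Antitone φ)
    (F G : ℝ → ℝ)
    (hF : ∀ x, F x = (P {ω | X ω ≤ x}).toReal)
    (hG : ∀ x, G x = (P {ω | φ (X ω) ≤ x}).toReal)
    (p : ℝ) (hp : p ∈ Set.Ioo (0 : ℝ) 1)
    (hne₁ : {x : ℝ | (1 - p) ≤ F x}.Nonempty) (hbd₁ : BddBelow {x : ℝ | (1 - p) ≤ F x})
    (hne₂ : {x : ℝ | (1 - p) < F x}.Nonempty) (hbd₂ : BddBelow {x : ℝ | (1 - p) < F x})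
    (hne₃ : {x : ℝ | p ≤ G x}.Nonempty) (hbd₃ : BddBelow {x : ℝ | p ≤ G x})
    (hne₄ : {x : ℝ | p < G x}.Nonempty) (hbd₄ : BddBelow {x : ℝ | p < G x}) :
    ((∀ x : ℝ, ContinuousWithinAt φ (Set.Ioi x) x) →
        sInf {x : ℝ | p ≤ G x} = φ (sInf {x : ℝ | (1 - p) < F x})) ∧
      ((∀ x : ℝ, ContinuousWithinAt φ (Set.Iio x) x) →
        sInf {x : ℝ | p < G x} = φ (sInf {x : ℝ | (1 - p) ≤ F x})) := by
  obtain ⟨hp0, hp1⟩ := hp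
  -- basic facts
  have hmF : Monotone F := by
    intro x y hxy
    rw [hF x, hF y]
    exact ENNReal.toReal_mono (measure_ne_top P _)
      (measure_mono (fun ω hω => le_trans hω hxy))
  have hcompl : ∀ A : Set Ω, MeasurableSet A → (P Aᶜ).toReal = 1 - (P A).toReal := by
    intro A hA
    have h1 : P A + P Aᶜ = 1 := by
      rw [measure_add_measure_compl hA, measure_univ]
    have h2 : (P A).toReal + (P Aᶜ).toReal = 1 := by
      rw [← ENNReal.toReal_add (measure_ne_top P A) (measure_ne_top P Aᶜ), h1]
      simp
    linarith
  set q : ℝ := sInf {x : ℝ | (1 - p) < F x} with hq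
  set l : ℝ := sInf {x : ℝ | (1 - p) ≤ F x} with hl
  -- F x ≤ 1 - p for x < q
  have hFq_lt : ∀ x, x < q → F x ≤ 1 - p := by
    intro x hx
    by_contra h
    exact absurd (csInf_le hbd₂ (not_le.mp h)) (not_le.mpr hx)
  -- F x > 1 - p for x > q
  have hFq_gt : ∀ x, q < x → 1 - p < F x := by
    intro x hx
    obtain ⟨z, hz, hzx⟩ := exists_lt_of_csInf_lt hne₂ hx
    exact lt_of_lt_of_le hz (hmF hzx.le)
  -- F x < 1 - p for x < l
  have hFl_lt : ∀ x, x < l → F x < 1 - p := by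
    intro x hx
    by_contra h
    exact absurd (csInf_le hbd₁ (not_lt.mp h)) (not_le.mpr hx)
  -- F x ≥ 1 - p for x > l
  have hFl_gt : ∀ x, l < x → 1 - p ≤ F x := by
    intro x hx
    obtain ⟨z, hz, hzx⟩ := exists_lt_of_csInf_lt hne₁ hx
    exact le_trans hz (hmF hzx.le)
  -- continuity from above: 1 - p ≤ F l
  have hFl : 1 - p ≤ F l := by
    have hset : {ω | X ω ≤ l} = ⋂ n : ℕ, {ω | X ω ≤ l + (n + 1 : ℝ)⁻¹} := by
      ext ω
      simp only [mem_setOf_eq, mem_iInter]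
      constructor
      · intro h n
        have : (0:ℝ) < (n + 1 : ℝ)⁻¹ := by positivity
        linarith
      · intro h
        by_contra hc
        obtain ⟨n, hn⟩ := exists_nat_one_div_lt (show (0:ℝ) < X ω - l by linarith)
        have := h n
        rw [one_div] at hn
        linarith
    have hanti' : Antitone (fun n : ℕ => {ω | X ω ≤ l + (n + 1 : ℝ)⁻¹}) := by
      intro n m hnm ω hω
      have hc : (n : ℝ) ≤ m := Nat.cast_le.mpr hnm
      have h1 : (m + 1 : ℝ)⁻¹ ≤ (n + 1 : ℝ)⁻¹ :=
        inv_anti₀ (by positivity) (by linarith)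
      have hω' : X ω ≤ l + (m + 1 : ℝ)⁻¹ := hω
      show X ω ≤ l + (n + 1 : ℝ)⁻¹
      linarith
    have hiInf : P {ω | X ω ≤ l} = ⨅ n : ℕ, P {ω | X ω ≤ l + (n + 1 : ℝ)⁻¹} := by
      rw [hset]
      exact hanti'.measure_iInter
        (fun n => (hX measurableSet_Iic).nullMeasurableSet)
        ⟨0, measure_ne_top P _⟩
    have hlow : ENNReal.ofReal (1 - p) ≤ P {ω | X ω ≤ l} := by
      rw [hiInf]
      refine le_iInf fun n => ?_
      have hgt : 1 - p ≤ F (l + (n + 1 : ℝ)⁻¹) := by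
        apply hFl_gt
        have : (0:ℝ) < (n + 1 : ℝ)⁻¹ := by positivity
        linarith
      rw [hF] at hgt
      exact ENNReal.ofReal_le_of_le_toReal hgt
    rw [hF]
    calc 1 - p = (ENNReal.ofReal (1 - p)).toReal := by
          rw [ENNReal.toReal_ofReal (by linarith)]
      _ ≤ (P {ω | X ω ≤ l}).toReal :=
          ENNReal.toReal_mono (measure_ne_top P _) hlow
  -- continuity from below: P(X < q) ≤ 1 - p
  have hIio : (P {ω | X ω < q}).toReal ≤ 1 - p := by
    have hset : {ω | X ω < q} = ⋃ n : ℕ, {ω | X ω ≤ q - (n + 1 : ℝ)⁻¹} := by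
      ext ω
      simp only [mem_setOf_eq, mem_iUnion]
      constructor
      · intro h
        obtain ⟨n, hn⟩ := exists_nat_one_div_lt (show (0:ℝ) < q - X ω by linarith)
        rw [one_div] at hn
        exact ⟨n, by linarith⟩
      · rintro ⟨n, hn⟩
        have : (0:ℝ) < (n + 1 : ℝ)⁻¹ := by positivity
        linarith
    have hmono : Monotone (fun n : ℕ => {ω | X ω ≤ q - (n + 1 : ℝ)⁻¹}) := by
      intro n m hnm ω hω
      have hc : (n : ℝ) ≤ m := Nat.cast_le.mpr hnm
      have h1 : (m + 1 : ℝ)⁻¹ ≤ (n + 1 : ℝ)⁻¹ :=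
        inv_anti₀ (by positivity) (by linarith)
      have hω' : X ω ≤ q - (n + 1 : ℝ)⁻¹ := hω
      show X ω ≤ q - (m + 1 : ℝ)⁻¹
      linarith
    have hiSup : P {ω | X ω < q} = ⨆ n : ℕ, P {ω | X ω ≤ q - (n + 1 : ℝ)⁻¹} := by
      rw [hset]
      exact hmono.measure_iUnion
    have hup : P {ω | X ω < q} ≤ ENNReal.ofReal (1 - p) := by
      rw [hiSup]
      refine iSup_le fun n => ?_
      have hle : F (q - (n + 1 : ℝ)⁻¹) ≤ 1 - p := by
        apply hFq_lt
        have : (0:ℝ) < (n + 1 : ℝ)⁻¹ := by positivity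
        linarith
      rw [hF] at hle
      exact ENNReal.le_ofReal_iff_toReal_le (measure_ne_top P _) (by linarith) |>.mpr hle
    calc (P {ω | X ω < q}).toReal ≤ (ENNReal.ofReal (1 - p)).toReal :=
          ENNReal.toReal_mono ENNReal.ofReal_ne_top hup
      _ = 1 - p := ENNReal.toReal_ofReal (by linarith)
  constructor
  · -- right continuous case: sInf {p ≤ G} = φ q
    intro hrc
    apply le_antisymm
    · -- sInf ≤ φ q : show p ≤ G (φ q)
      apply csInf_le hbd₃
      show p ≤ G (φ q)
      have hsub : {ω | X ω < q}ᶜ ⊆ {ω | φ (X ω) ≤ φ q} := by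
        intro ω hω
        exact hanti (not_lt.mp hω)
      have h1 : (P {ω | X ω < q}ᶜ).toReal ≤ G (φ q) := by
        rw [hG]
        exact ENNReal.toReal_mono (measure_ne_top P _) (measure_mono hsub)
      have h2 : (P {ω | X ω < q}ᶜ).toReal = 1 - (P {ω | X ω < q}).toReal :=
        hcompl _ (hX measurableSet_Iio)
      linarith
    · -- φ q ≤ sInf : every y with p ≤ G y satisfies φ q ≤ y
      apply le_csInf hne₃
      intro y hy
      by_contra hlt
      push_neg at hlt
      -- y < φ q; right continuity gives Ioc q u on which φ > y
      have hev : ∀ᶠ t in nhdsWithin q (Set.Ioi q), y < φ t :=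
        (hrc q).eventually (eventually_gt_nhds hlt)
      obtain ⟨u, hu, hsub⟩ := mem_nhdsGT_iff_exists_Ioc_subset.mp hev
      have hkey : {ω | φ (X ω) ≤ y} ⊆ {ω | X ω ≤ u}ᶜ := by
        intro ω hω
        have hω' : φ (X ω) ≤ y := hω
        simp only [mem_compl_iff, mem_setOf_eq, not_le]
        by_contra hc
        push_neg at hc
        rcases le_or_gt (X ω) q with h | h
        · have h2 : φ q ≤ φ (X ω) := hanti h
          linarith
        · have h2 : y < φ (X ω) := hsub ⟨h, hc⟩
          linarith
      have h1 : G y ≤ (P {ω | X ω ≤ u}ᶜ).toReal := by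
        rw [hG]
        exact ENNReal.toReal_mono (measure_ne_top P _) (measure_mono hkey)
      have h2 : (P {ω | X ω ≤ u}ᶜ).toReal = 1 - F u := by
        rw [hF]
        exact hcompl _ (hX measurableSet_Iic)
      have h3 : 1 - p < F u := hFq_gt u hu
      have : p ≤ G y := hy
      linarith
  · -- left continuous case: sInf {p < G} = φ l
    intro hlc
    apply le_antisymm
    · -- sInf ≤ φ l
      apply le_of_forall_gt_imp_ge_of_dense
      intro y hy
      apply csInf_le hbd₄
      show p < G y
      -- left continuity gives Ico u l on which φ < y
      have hev : ∀ᶠ t in nhdsWithin l (Set.Iio l), φ t < y :=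
        (hlc l).eventually (eventually_lt_nhds hy)
      obtain ⟨u, hu, hsub⟩ := mem_nhdsLT_iff_exists_Ico_subset.mp hev
      have hkey : {ω | X ω ≤ u}ᶜ ⊆ {ω | φ (X ω) ≤ y} := by
        intro ω hω
        simp only [mem_compl_iff, mem_setOf_eq, not_le] at hω
        show φ (X ω) ≤ y
        rcases lt_or_ge (X ω) l with h | h
        · exact (hsub ⟨hω.le, h⟩).le
        · exact le_trans (hanti h) hy.le
      have h1 : (P {ω | X ω ≤ u}ᶜ).toReal ≤ G y := by
        rw [hG]
        exact ENNReal.toReal_mono (measure_ne_top P _) (measure_mono hkey)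
      have h2 : (P {ω | X ω ≤ u}ᶜ).toReal = 1 - F u := by
        rw [hF]
        exact hcompl _ (hX measurableSet_Iic)
      have h3 : F u < 1 - p := hFl_lt u hu
      linarith
    · -- φ l ≤ sInf
      apply le_csInf hne₄
      intro y hy
      by_contra hlt
      push_neg at hlt
      -- y < φ l; show G y ≤ p
      have hkey : {ω | φ (X ω) ≤ y} ⊆ {ω | X ω ≤ l}ᶜ := by
        intro ω hω
        have hω' : φ (X ω) ≤ y := hω
        simp only [mem_compl_iff, mem_setOf_eq, not_le]
        by_contra hc
        push_neg at hc
        have h2 : φ l ≤ φ (X ω) := hanti hc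
        linarith
      have h1 : G y ≤ (P {ω | X ω ≤ l}ᶜ).toReal := by
        rw [hG]
        exact ENNReal.toReal_mono (measure_ne_top P _) (measure_mono hkey)
      have h2 : (P {ω | X ω ≤ l}ᶜ).toReal = 1 - F l := by
        rw [hF]
        exact hcompl _ (hX measurableSet_Iic)
      have : p < G y := hy
      linarith
end

section
/- For a random variable X and p ∈ (0,1), the closed interval [lq_X(p), rq_X(p)] equals the set {y : P(X < y) ≤ p and P(X ≤ y) ≥ p}. Consequently, for any non-decreasing (not necessarily continuous) φ : ℝ → ℝ with Y = φ(X), both φ(lq_X(p)) and φ(rq_X(p)) lie in [lq_Y(p), rq_Y(p)], so that P(min < Y < max) = 0 between the transformed quantile and the quantile of the transformed variable. -/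
open MeasureTheory Set

section Helpers

variable {Ω : Type*} [MeasurableSpace Ω] {P : Measure Ω} [IsProbabilityMeasure P]
variable {X : Ω → ℝ}

lemma qe_mono (hX : Measurable X) {a b : ℝ} (hab : a ≤ b) :
    (P {ω | X ω ≤ a}).toReal ≤ (P {ω | X ω ≤ b}).toReal :=
  ENNReal.toReal_mono (measure_ne_top P _) (measure_mono fun ω h => le_trans h hab)

-- right continuity at the infimum
lemma qe_le_sInf (hX : Measurable X) {p : ℝ}
    (hne : {x : ℝ | p ≤ (P {ω | X ω ≤ x}).toReal}.Nonempty)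
    (hbd : BddBelow {x : ℝ | p ≤ (P {ω | X ω ≤ x}).toReal}) :
    p ≤ (P {ω | X ω ≤ sInf {x : ℝ | p ≤ (P {ω | X ω ≤ x}).toReal}}).toReal := by
  set S := {x : ℝ | p ≤ (P {ω | X ω ≤ x}).toReal} with hS
  set m := sInf S with hm
  have hInter : {ω | X ω ≤ m} = ⋂ n : ℕ, {ω | X ω ≤ m + 1/(n+1)} := by
    ext ω
    simp only [mem_iInter, mem_setOf_eq]
    constructor
    · intro h n
      have h1 : (0:ℝ) < 1/((n:ℝ)+1) := by positivity
      linarith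
    · intro h
      by_contra hc
      push_neg at hc
      obtain ⟨n, hn⟩ := exists_nat_one_div_lt (sub_pos.mpr hc)
      have := h n
      linarith
  have hAnti : Antitone (fun n : ℕ => {ω | X ω ≤ m + 1/(n+1)}) := by
    intro a b hab ω hω
    simp only [mem_setOf_eq] at *
    have hcast : ((a:ℝ)) ≤ b := Nat.cast_le.mpr hab
    have : (1:ℝ)/((b:ℝ)+1) ≤ 1/((a:ℝ)+1) := by
      apply one_div_le_one_div_of_le (by positivity)
      linarith
    linarith
  have hmeas : P (⋂ n : ℕ, {ω | X ω ≤ m + 1/(n+1)}) = ⨅ n : ℕ, P {ω | X ω ≤ m + 1/(n+1)} := by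
    apply hAnti.measure_iInter
    · exact fun n => (hX measurableSet_Iic).nullMeasurableSet
    · exact ⟨0, measure_ne_top P _⟩
  rw [hInter, hmeas]
  have hterm : ∀ n : ℕ, ENNReal.ofReal p ≤ P {ω | X ω ≤ m + 1/(n+1)} := by
    intro n
    have hpos : (0:ℝ) < 1/((n:ℝ)+1) := by positivity
    obtain ⟨x, hxS, hx⟩ := (csInf_lt_iff hbd hne).mp (by linarith : sInf S < m + 1/(n+1))
    have : p ≤ (P {ω | X ω ≤ m + 1/(n+1)}).toReal := le_trans hxS (qe_mono hX hx.le)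
    exact (ENNReal.ofReal_le_iff_le_toReal (measure_ne_top P _)).mpr this
  have hle : ENNReal.ofReal p ≤ ⨅ n : ℕ, P {ω | X ω ≤ m + 1/(n+1)} := le_iInf hterm
  have hfin : (⨅ n : ℕ, P {ω | X ω ≤ m + 1/(n+1)}) ≠ ⊤ :=
    ne_top_of_le_ne_top (measure_ne_top P {ω | X ω ≤ m + 1/((0:ℕ)+1)}) (iInf_le _ 0)
  exact (ENNReal.ofReal_le_iff_le_toReal hfin).mp hle


lemma qe_le_iff (hX : Measurable X) {p : ℝ}
    (hne : {x : ℝ | p ≤ (P {ω | X ω ≤ x}).toReal}.Nonempty)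
    (hbd : BddBelow {x : ℝ | p ≤ (P {ω | X ω ≤ x}).toReal}) (y : ℝ) :
    p ≤ (P {ω | X ω ≤ y}).toReal ↔ sInf {x : ℝ | p ≤ (P {ω | X ω ≤ x}).toReal} ≤ y := by
  constructor
  · intro h; exact csInf_le hbd h
  · intro h; exact le_trans (qe_le_sInf hX hne hbd) (qe_mono hX h)

lemma qe_lt_iff (hX : Measurable X) {p : ℝ} (hp0 : 0 < p)
    (hne : {x : ℝ | p < (P {ω | X ω ≤ x}).toReal}.Nonempty)
    (hbd : BddBelow {x : ℝ | p < (P {ω | X ω ≤ x}).toReal}) (y : ℝ) :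
    (P {ω | X ω < y}).toReal ≤ p ↔ y ≤ sInf {x : ℝ | p < (P {ω | X ω ≤ x}).toReal} := by
  constructor
  · intro h
    apply le_csInf hne
    intro x hx
    by_contra hc
    push_neg at hc
    have hsub : {ω | X ω ≤ x} ⊆ {ω | X ω < y} := fun ω hω => lt_of_le_of_lt hω hc
    have := ENNReal.toReal_mono (measure_ne_top P _) (measure_mono hsub)
    exact absurd (lt_of_lt_of_le hx (this.trans h)) (lt_irrefl p)
  · intro h
    have hUnion : {ω | X ω < y} = ⋃ n : ℕ, {ω | X ω ≤ y - 1/(n+1)} := by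
      ext ω
      simp only [mem_iUnion, mem_setOf_eq]
      constructor
      · intro hω
        obtain ⟨n, hn⟩ := exists_nat_one_div_lt (sub_pos.mpr hω)
        exact ⟨n, by linarith⟩
      · rintro ⟨n, hn⟩
        have : (0:ℝ) < 1/((n:ℝ)+1) := by positivity
        linarith
    have hMono : Monotone (fun n : ℕ => {ω | X ω ≤ y - 1/(n+1)}) := by
      intro a b hab ω hω
      simp only [mem_setOf_eq] at *
      have hcast : ((a:ℝ)) ≤ b := Nat.cast_le.mpr hab
      have : (1:ℝ)/((b:ℝ)+1) ≤ 1/((a:ℝ)+1) := by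
        apply one_div_le_one_div_of_le (by positivity)
        linarith
      linarith
    have hmeas : P {ω | X ω < y} = ⨆ n : ℕ, P {ω | X ω ≤ y - 1/(n+1)} := by
      rw [hUnion]; exact hMono.measure_iUnion
    rw [hmeas]
    apply ENNReal.toReal_le_of_le_ofReal hp0.le
    apply iSup_le
    intro n
    have hlt : y - 1/((n:ℝ)+1) < sInf {x : ℝ | p < (P {ω | X ω ≤ x}).toReal} := by
      have : (0:ℝ) < 1/((n:ℝ)+1) := by positivity
      linarith
    have hnotmem : ¬ p < (P {ω | X ω ≤ y - 1/((n:ℝ)+1)}).toReal := by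
      intro hmem
      exact absurd (csInf_le hbd hmem) (not_le.mpr hlt)
    push_neg at hnotmem
    exact (ENNReal.le_ofReal_iff_toReal_le (measure_ne_top P _) hp0.le).mpr hnotmem

lemma qe_zero {Y : Ω → ℝ} (hY : Measurable Y) {p c d : ℝ}
    (h1 : (P {ω | Y ω < d}).toReal ≤ p) (h2 : p ≤ (P {ω | Y ω ≤ c}).toReal) :
    P {ω | c < Y ω ∧ Y ω < d} = 0 := by
  rcases le_or_gt d c with h | h
  · have : {ω | c < Y ω ∧ Y ω < d} = ∅ := by
      ext ω
      simp only [mem_setOf_eq, mem_empty_iff_false, iff_false, not_and, not_lt]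
      intro hc; linarith
    rw [this, measure_empty]
  · have hsub : {ω | Y ω ≤ c} ⊆ {ω | Y ω < d} := fun ω hω => lt_of_le_of_lt hω h
    have heq : {ω | c < Y ω ∧ Y ω < d} = {ω | Y ω < d} \ {ω | Y ω ≤ c} := by
      ext ω
      simp only [mem_setOf_eq, mem_diff, not_le]
      tauto
    rw [heq, measure_diff hsub ((hY measurableSet_Iic).nullMeasurableSet) (measure_ne_top P _)]
    exact tsub_eq_zero_of_le
      ((ENNReal.toReal_le_toReal (measure_ne_top P _) (measure_ne_top P _)).mp (h1.trans h2))

end Helpers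



/-- The interval [lq_X(p), rq_X(p)] equals {y : P(X < y) ≤ p ∧ P(X ≤ y) ≥ p}; hence for any
non-decreasing φ with Y = φ(X), φ(lq_X(p)) and φ(rq_X(p)) lie in [lq_Y(p), rq_Y(p)], and the
probability mass strictly between each transformed quantile and the corresponding quantile of
the transformed variable is zero. -/
theorem quantile_interval_and_equivariance_noncontinuous {Ω : Type*} [MeasurableSpace Ω]
    (P : Measure Ω) [IsProbabilityMeasure P] (X : Ω → ℝ) (hX : Measurable X)
    (φ : ℝ → ℝ) (hmono : Monotone φ) (hφ : Measurable φ)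
    (F G : ℝ → ℝ)
    (hF : ∀ x, F x = (P {ω | X ω ≤ x}).toReal)
    (hG : ∀ x, G x = (P {ω | φ (X ω) ≤ x}).toReal)
    (p : ℝ) (hp : p ∈ Set.Ioo (0 : ℝ) 1)
    (hne₁ : {x : ℝ | p ≤ F x}.Nonempty) (hbd₁ : BddBelow {x : ℝ | p ≤ F x})
    (hne₂ : {x : ℝ | p < F x}.Nonempty) (hbd₂ : BddBelow {x : ℝ | p < F x})
    (hne₃ : {x : ℝ | p ≤ G x}.Nonempty) (hbd₃ : BddBelow {x : ℝ | p ≤ G x})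
    (hne₄ : {x : ℝ | p < G x}.Nonempty) (hbd₄ : BddBelow {x : ℝ | p < G x}) :
    Set.Icc (sInf {x : ℝ | p ≤ F x}) (sInf {x : ℝ | p < F x}) =
        {y : ℝ | (P {ω | X ω < y}).toReal ≤ p ∧ p ≤ (P {ω | X ω ≤ y}).toReal} ∧
      φ (sInf {x : ℝ | p ≤ F x}) ∈ Set.Icc (sInf {x : ℝ | p ≤ G x}) (sInf {x : ℝ | p < G x}) ∧
      φ (sInf {x : ℝ | p < F x}) ∈ Set.Icc (sInf {x : ℝ | p ≤ G x}) (sInf {x : ℝ | p < G x}) ∧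
      P {ω | min (φ (sInf {x : ℝ | p ≤ F x})) (sInf {x : ℝ | p ≤ G x}) < φ (X ω) ∧
          φ (X ω) < max (φ (sInf {x : ℝ | p ≤ F x})) (sInf {x : ℝ | p ≤ G x})} = 0 ∧
      P {ω | min (φ (sInf {x : ℝ | p < F x})) (sInf {x : ℝ | p < G x}) < φ (X ω) ∧
          φ (X ω) < max (φ (sInf {x : ℝ | p < F x})) (sInf {x : ℝ | p < G x})} = 0 := by
  obtain ⟨hp0, hp1⟩ := hp
  have hY : Measurable (fun ω => φ (X ω)) := hφ.comp hX
  have hFs : {x : ℝ | p ≤ F x} = {x : ℝ | p ≤ (P {ω | X ω ≤ x}).toReal} := by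
    ext x; rw [mem_setOf_eq, mem_setOf_eq, hF]
  have hFs' : {x : ℝ | p < F x} = {x : ℝ | p < (P {ω | X ω ≤ x}).toReal} := by
    ext x; rw [mem_setOf_eq, mem_setOf_eq, hF]
  have hGs : {x : ℝ | p ≤ G x} = {x : ℝ | p ≤ (P {ω | φ (X ω) ≤ x}).toReal} := by
    ext x; rw [mem_setOf_eq, mem_setOf_eq, hG]
  have hGs' : {x : ℝ | p < G x} = {x : ℝ | p < (P {ω | φ (X ω) ≤ x}).toReal} := by
    ext x; rw [mem_setOf_eq, mem_setOf_eq, hG]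
  rw [hFs] at hne₁ hbd₁
  rw [hFs'] at hne₂ hbd₂
  rw [hGs] at hne₃ hbd₃
  rw [hGs'] at hne₄ hbd₄
  rw [hFs, hFs', hGs, hGs']
  set lq := sInf {x : ℝ | p ≤ (P {ω | X ω ≤ x}).toReal} with hlq
  set rq := sInf {x : ℝ | p < (P {ω | X ω ≤ x}).toReal} with hrq
  set lqY := sInf {x : ℝ | p ≤ (P {ω | φ (X ω) ≤ x}).toReal} with hlqY
  set rqY := sInf {x : ℝ | p < (P {ω | φ (X ω) ≤ x}).toReal} with hrqY
  have hsubF : {x : ℝ | p < (P {ω | X ω ≤ x}).toReal} ⊆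
      {x : ℝ | p ≤ (P {ω | X ω ≤ x}).toReal} := by
    intro x hx
    simp only [mem_setOf_eq] at hx ⊢
    exact hx.le
  have hsubG : {x : ℝ | p < (P {ω | φ (X ω) ≤ x}).toReal} ⊆
      {x : ℝ | p ≤ (P {ω | φ (X ω) ≤ x}).toReal} := by
    intro x hx
    simp only [mem_setOf_eq] at hx ⊢
    exact hx.le
  have hlqrq : lq ≤ rq := csInf_le_csInf hbd₁ hne₂ hsubF
  have hlqrqY : lqY ≤ rqY := csInf_le_csInf hbd₃ hne₄ hsubG
  -- facts about X quantiles
  have hXle : ∀ y, p ≤ (P {ω | X ω ≤ y}).toReal ↔ lq ≤ y :=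
    fun y => qe_le_iff hX hne₁ hbd₁ y
  have hXlt : ∀ y, (P {ω | X ω < y}).toReal ≤ p ↔ y ≤ rq :=
    fun y => qe_lt_iff hX hp0 hne₂ hbd₂ y
  have hYle : ∀ y, p ≤ (P {ω | φ (X ω) ≤ y}).toReal ↔ lqY ≤ y :=
    fun y => qe_le_iff hY hne₃ hbd₃ y
  have hYlt : ∀ y, (P {ω | φ (X ω) < y}).toReal ≤ p ↔ y ≤ rqY :=
    fun y => qe_lt_iff hY hp0 hne₄ hbd₄ y
  -- key measure comparisons for the monotone map
  have hcomp_le : ∀ z : ℝ, (P {ω | X ω ≤ z}).toReal ≤ (P {ω | φ (X ω) ≤ φ z}).toReal :=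
    fun z => ENNReal.toReal_mono (measure_ne_top P _)
      (measure_mono fun ω hω => hmono hω)
  have hcomp_lt : ∀ z : ℝ, (P {ω | φ (X ω) < φ z}).toReal ≤ (P {ω | X ω < z}).toReal := by
    intro z
    refine ENNReal.toReal_mono (measure_ne_top P _) (measure_mono fun ω hω => ?_)
    simp only [mem_setOf_eq] at *
    by_contra hc
    push_neg at hc
    exact absurd (hmono hc) (not_le.mpr hω)
  -- φ(lq) and φ(rq) lie in [lqY, rqY]
  have h2a : lqY ≤ φ lq := (hYle (φ lq)).mp
    (le_trans (le_trans ((hXle lq).mpr le_rfl) (hcomp_le lq)) le_rfl)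
  have h2b : φ lq ≤ rqY := (hYlt (φ lq)).mp
    (le_trans (hcomp_lt lq) ((hXlt lq).mpr hlqrq))
  have h3a : lqY ≤ φ rq := (hYle (φ rq)).mp
    (le_trans ((hXle rq).mpr hlqrq) (hcomp_le rq))
  have h3b : φ rq ≤ rqY := (hYlt (φ rq)).mp
    (le_trans (hcomp_lt rq) ((hXlt rq).mpr le_rfl))
  refine ⟨?_, ⟨h2a, h2b⟩, ⟨h3a, h3b⟩, ?_, ?_⟩
  · ext y
    simp only [mem_Icc, mem_setOf_eq]
    rw [← hXle y, ← hXlt y]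
    tauto
  · apply qe_zero hY (p := p)
    · exact (hYlt _).mpr (max_le h2b hlqrqY)
    · exact (hYle _).mpr (le_min h2a le_rfl)
  · apply qe_zero hY (p := p)
    · exact (hYlt _).mpr (max_le h3b le_rfl)
    · exact (hYle _).mpr (le_min h3a hlqrqY)
end
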